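/- Let p be a prime and n ≥ 0. Then there is exactly one triple (j, m, k) of natural numbers with j ≥ 1, m ≢ p−1 (mod p), 0 ≤ k < r(j), and D(j, m) + 2(p−1)·k = 2p^{n+2} − 1, namely (j, m, k) = (n+2, 0, r(n)). -/

import Mathlib

/-- The function `r` governing lengths of `v₁`-towers: `r 0 = 0`, `r 1 = p`,
`r n = p^n + r (n-2)`. -/
def r (p : ℕ) : ℕ → ℕ
  | 0 => 0
  | 1 => p
  | n + 2 => p ^ (n + 2) + r p n

/-- The degree of the class `x_{j,m} = λ_j μ^{p^(j−1) m}` in `THH_*(ℓ; k(1))`. -/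
def D (p j m : ℕ) : ℕ :=
  if j % 2 = 0 then 2 * (p - 1) * r p (j - 1) + 2 * p - 1 + 2 * m * p ^ (j + 1)
  else 2 * (p - 1) * (r p (j - 1) + 1) + 1 + 2 * m * p ^ (j + 1)

lemma r_sum (p : ℕ) (hp : 1 ≤ p) (n : ℕ) :
    (p - 1) * (r p n + r p (n + 1)) + p = p ^ (n + 2) := by
  induction n with
  | zero =>
    obtain ⟨q, rfl⟩ : ∃ q, p = q + 1 := ⟨p - 1, by omega⟩
    show (q + 1 - 1) * (0 + (q + 1)) + (q + 1) = (q + 1) ^ 2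
    simp only [Nat.add_sub_cancel]
    ring
  | succ n ih =>
    have h2 : r p (n + 2) = p ^ (n + 2) + r p n := rfl
    calc (p - 1) * (r p (n + 1) + r p (n + 2)) + p
        = (p - 1) * p ^ (n + 2) + ((p - 1) * (r p n + r p (n + 1)) + p) := by
          rw [h2]; ring
      _ = (p - 1) * p ^ (n + 2) + p ^ (n + 2) := by rw [ih]
      _ = ((p - 1) + 1) * p ^ (n + 2) := by ring
      _ = p ^ (n + 3) := by rw [Nat.sub_add_cancel hp]; ring

lemma r_le_succ (p : ℕ) (hp : 1 ≤ p) : ∀ n, r p n ≤ r p (n + 1)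
  | 0 => by simp [r]
  | 1 => by
    show p ≤ p ^ 2 + r p 0
    have : p ≤ p ^ 2 := Nat.le_self_pow two_ne_zero p
    simp [r]; omega
  | n + 2 => by
    have ih := r_le_succ p hp n
    show p ^ (n + 2) + r p n ≤ p ^ (n + 3) + r p (n + 1)
    exact Nat.add_le_add (Nat.pow_le_pow_right hp (by omega)) ih

lemma r_monotone (p : ℕ) (hp : 1 ≤ p) : Monotone (r p) :=
  monotone_nat_of_le_succ (r_le_succ p hp)

lemma r_add_le (p n : ℕ) (hp : 2 ≤ p) :
    r p n + r p (n + 1) + p ≤ p ^ (n + 2) := by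
  have h := r_sum p (by omega) n
  have h1 : r p n + r p (n + 1) ≤ (p - 1) * (r p n + r p (n + 1)) :=
    Nat.le_mul_of_pos_left _ (by omega)
  omega

lemma key (p n j k : ℕ) (hp : 2 ≤ p) (hj : n + 2 ≤ j)
    (hs : r p (j - 1) + k = r p n + r p (n + 1)) : j = n + 2 ∧ k = r p n := by
  by_cases h : n + 3 ≤ j
  · exfalso
    have h1 : r p (n + 2) ≤ r p (j - 1) := r_monotone p (by omega) (by omega)
    have h2 : r p (n + 2) = p ^ (n + 2) + r p n := rfl
    have h3 : r p n + r p (n + 1) + p ≤ p ^ (n + 2) := r_add_le p n hp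
    omega
  · have hj2 : j = n + 2 := by omega
    subst hj2
    have e : n + 2 - 1 = n + 1 := rfl
    rw [e] at hs
    exact ⟨rfl, by omega⟩

/-- For a prime `p` and `n ≥ 0`, the unique triple `(j, m, k)` with `j ≥ 1`,
`m ≢ p−1 (mod p)`, `k < r j` and `D(j,m) + 2(p−1)k = 2p^(n+2) − 1` is
`(n+2, 0, r n)`. -/
theorem stmt3 (p n : ℕ) (hp : p.Prime) :
    ∀ j m k : ℕ,
      (1 ≤ j ∧ m % p ≠ p - 1 ∧ k < r p j ∧
        D p j m + 2 * (p - 1) * k = 2 * p ^ (n + 2) - 1)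
      ↔ (j, m, k) = (n + 2, 0, r p n) := by
  intro j m k
  have hp2 : 2 ≤ p := hp.two_le
  have hPsum := r_sum p (by omega) n
  have hPge : p ≤ p ^ (n + 2) := Nat.le_self_pow (by omega) p
  constructor
  · rintro ⟨hj1, hm, hk, heq⟩
    -- Step 1: extract the unified linear equation
    -- (p-1)*r p (j-1) + p + (p-1)*k + m * p^(j+1) = p^(n+2)
    have heqL : (p - 1) * r p (j - 1) + p + (p - 1) * k + m * p ^ (j + 1)
        = p ^ (n + 2) := by
      by_cases hj2 : j % 2 = 0
      · rw [D, if_pos hj2] at heq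
        have e1 : 2 * (p - 1) * r p (j - 1) = 2 * ((p - 1) * r p (j - 1)) := by ring
        have e2 : 2 * m * p ^ (j + 1) = 2 * (m * p ^ (j + 1)) := by ring
        have e3 : 2 * (p - 1) * k = 2 * ((p - 1) * k) := by ring
        rw [e1, e2, e3] at heq
        omega
      · rw [D, if_neg hj2] at heq
        have e1 : 2 * (p - 1) * (r p (j - 1) + 1)
            = 2 * ((p - 1) * r p (j - 1)) + 2 * (p - 1) := by ring
        have e2 : 2 * m * p ^ (j + 1) = 2 * (m * p ^ (j + 1)) := by ring
        have e3 : 2 * (p - 1) * k = 2 * ((p - 1) * k) := by ring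
        rw [e1, e2, e3] at heq
        omega
    -- Step 2: bound (p-1)*r p (j-1) + p + (p-1)*k < p^(j+1)
    have hsumj : (p - 1) * r p (j - 1) + (p - 1) * r p j + p = p ^ (j + 1) := by
      have h := r_sum p (by omega) (j - 1)
      have e1 : j - 1 + 1 = j := by omega
      have e2 : j - 1 + 2 = j + 1 := by omega
      rw [e1, e2, mul_add] at h
      exact h
    have hCB : (p - 1) * k + (p - 1) ≤ (p - 1) * r p j := by
      have h1 : (p - 1) * (k + 1) ≤ (p - 1) * r p j :=
        Nat.mul_le_mul_left _ hk
      have h2 : (p - 1) * (k + 1) = (p - 1) * k + (p - 1) := by ring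
      omega
    by_cases hcase : j + 1 ≤ n + 2
    · -- impossible: p^(j+1) divides a positive number smaller than itself
      exfalso
      have hdvdP : p ^ (j + 1) ∣ p ^ (n + 2) := pow_dvd_pow p hcase
      have hA : (p - 1) * r p (j - 1) + p + (p - 1) * k
          = p ^ (n + 2) - m * p ^ (j + 1) := by omega
      have hdvd : p ^ (j + 1) ∣ (p - 1) * r p (j - 1) + p + (p - 1) * k := by
        rw [hA]
        exact Nat.dvd_sub hdvdP (Dvd.intro_left m rfl)
      have hle := Nat.le_of_dvd (by omega) hdvd
      omega
    · -- j ≥ n + 2, hence m = 0 and we can identify j and k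
      have hjn : n + 2 ≤ j := by omega
      have hPQ : p ^ (n + 2) < p ^ (j + 1) :=
        Nat.pow_lt_pow_right (by omega) (by omega)
      have hm0 : m = 0 := by
        by_contra hm1
        have : p ^ (j + 1) ≤ m * p ^ (j + 1) :=
          Nat.le_mul_of_pos_left _ (by omega)
        omega
      subst hm0
      have heq2 : (p - 1) * r p (j - 1) + (p - 1) * k
          = (p - 1) * r p n + (p - 1) * r p (n + 1) := by
        rw [mul_add] at hPsum
        omega
      have heq3 : r p (j - 1) + k = r p n + r p (n + 1) := by
        have h1 : (p - 1) * (r p (j - 1) + k) = (p - 1) * (r p n + r p (n + 1)) := by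
          rw [mul_add, mul_add]; omega
        exact Nat.eq_of_mul_eq_mul_left (by omega) h1
      obtain ⟨hje, hke⟩ := key p n j k hp2 hjn heq3
      subst hje hke
      rfl
  · intro h
    simp only [Prod.mk.injEq] at h
    obtain ⟨h1, h2', h3'⟩ := h
    subst h1; subst h2'; subst h3'
    refine ⟨by omega, by simp; omega, ?_, ?_⟩
    · show r p n < r p (n + 2)
      have h2 : r p (n + 2) = p ^ (n + 2) + r p n := rfl
      have : 0 < p ^ (n + 2) := Nat.pow_pos (by omega)
      omega
    · have e : n + 2 - 1 = n + 1 := rfl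
      rw [mul_add] at hPsum
      by_cases h2 : (n + 2) % 2 = 0
      · rw [D, if_pos h2, e]
        have e1 : 2 * (p - 1) * r p (n + 1) = 2 * ((p - 1) * r p (n + 1)) := by ring
        have e3 : 2 * (p - 1) * r p n = 2 * ((p - 1) * r p n) := by ring
        rw [e1, e3]
        omega
      · rw [D, if_neg h2, e]
        have e1 : 2 * (p - 1) * (r p (n + 1) + 1)
            = 2 * ((p - 1) * r p (n + 1)) + 2 * (p - 1) := by ring
        have e3 : 2 * (p - 1) * r p n = 2 * ((p - 1) * r p n) := by ring
        rw [e1, e3]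
        omega
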